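/- For every 1 ≤ i ≤ r, Σ_{k=1}^{iq} (nω_r)_{w⁻¹(k)} = −(n − i); that is, the pairing of the permuted weight w(nω_r) with the fundamental coweight λ_{iq} equals −(n−i). -/

import Mathlib

/-- For every `1 ≤ i ≤ r`, `Σ_{k=1}^{iq} (nω_r)_{w⁻¹(k)} = −(n − i)`;
that is, the pairing of the permuted weight `w(nω_r)` with the fundamental coweight
`λ_{iq}` equals `−(n−i)`. Here `n = rq+1` with `r ≥ 1`, `q ≥ 2`; `nω_r ∈ ℝ^n` has its
first `r` coordinates equal to `n−r` and the remaining `n−r` coordinates equal to `−r`;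
and `w = w_{r,n}` is the permutation of `{1,…,n}` with `w(j) = jq+1` for `1 ≤ j ≤ r`
and increasing on `{r+1,…,n}`. -/
theorem stmt_12 (r q : ℕ) (hr : 1 ≤ r) (hq : 2 ≤ q) (n : ℕ) (hn : n = r * q + 1)
    (w : Equiv.Perm ℕ)
    (hfix : ∀ k, k ∉ Finset.Icc 1 n → w k = k)
    (hw : ∀ j, 1 ≤ j → j ≤ r → w j = j * q + 1)
    (hmono : ∀ a b, r + 1 ≤ a → a < b → b ≤ n → w a < w b)
    (i : ℕ) (hi1 : 1 ≤ i) (hir : i ≤ r) :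
    (∑ k ∈ Finset.Icc 1 (i * q),
        (if w.symm k ≤ r then ((n : ℝ) - (r : ℝ)) else -(r : ℝ)))
      = -((n : ℝ) - (i : ℝ)) := by
  have hfilter : (Finset.Icc 1 (i*q)).filter (fun k => w.symm k ≤ r)
      = (Finset.Icc 1 (i-1)).image (fun j => j*q+1) := by
    ext k
    simp only [Finset.mem_filter, Finset.mem_Icc, Finset.mem_image]
    constructor
    · rintro ⟨⟨hk1, hk2⟩, hle⟩
      set j := w.symm k with hj
      have hj1 : 1 ≤ j := by
        by_contra h
        have hj0 : j = 0 := by omega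
        have : w 0 = 0 := hfix 0 (by simp)
        have : k = 0 := by
          have := w.apply_symm_apply k
          rw [← hj, hj0] at this
          omega
        omega
      have hkj : w j = k := w.apply_symm_apply k
      have hk : k = j * q + 1 := by rw [← hkj, hw j hj1 (le_trans hle le_rfl)]
      refine ⟨j, ⟨hj1, ?_⟩, hk.symm⟩
      have : j * q + 1 ≤ i * q := by omega
      have : j < i := by
        by_contra h
        have : i * q ≤ j * q := Nat.mul_le_mul_right q (by omega)
        omega
      omega
    · rintro ⟨j, ⟨hj1, hj2⟩, rfl⟩
      have hjr : j ≤ r := by omega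
      have hwj : w j = j * q + 1 := hw j hj1 hjr
      have hsymm : w.symm (j * q + 1) = j := by
        rw [← hwj]; exact w.symm_apply_apply j
      refine ⟨⟨by omega, ?_⟩, by rw [hsymm]; omega⟩
      have : j * q ≤ (i - 1) * q := Nat.mul_le_mul_right q hj2
      have : (i - 1) * q + q = i * q := by
        have : (i - 1 + 1) * q = i * q := by congr 1; omega
        nlinarith [this]
      omega
  have hcard : ((Finset.Icc 1 (i*q)).filter (fun k => w.symm k ≤ r)).card = i - 1 := by
    have hinj : Function.Injective (fun j : ℕ => j * q + 1) := by
      intro a b hab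
      have h' : a * q + 1 = b * q + 1 := hab
      have h2 : a * q = b * q := by omega
      exact Nat.eq_of_mul_eq_mul_right (by omega) h2
    rw [hfilter, Finset.card_image_of_injective _ hinj]
    rw [Nat.card_Icc]; omega
  have hcardtot : (Finset.Icc 1 (i*q)).card = i * q := by simp
  rw [Finset.sum_ite, Finset.sum_const, Finset.sum_const, hcard]
  have hcard2 : ((Finset.Icc 1 (i*q)).filter (fun k => ¬ w.symm k ≤ r)).card
      = i * q - (i - 1) := by
    have := Finset.card_filter_add_card_filter_not
      (s := Finset.Icc 1 (i*q)) (p := fun k => w.symm k ≤ r)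
    omega
  rw [hcard2]
  have h1 : ((i - 1 : ℕ) : ℝ) = (i : ℝ) - 1 := by
    push_cast [Nat.cast_sub hi1]; ring
  have h2 : ((i * q - (i - 1) : ℕ) : ℝ) = (i : ℝ) * q - ((i : ℝ) - 1) := by
    have hle : i - 1 ≤ i * q := by
      have : i ≤ i * q := Nat.le_mul_of_pos_right i (by omega)
      omega
    push_cast [Nat.cast_sub hle, Nat.cast_sub hi1]; ring
  have hnr : (n : ℝ) = (r : ℝ) * q + 1 := by rw [hn]; push_cast; ring
  simp only [nsmul_eq_mul, h1, h2, hnr]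
  ring
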